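/- Fix $h = (z_0, z_1) \in \mathbb{R}^d \times \mathbb{R}^d$ and $\sigma > 0$. Let $p_t(\cdot \mid h) = \mathcal{N}((1-t)z_0 + t z_1, \sigma^2 I)$ and $u_t(z \mid h) = z_1 - z_0$. Then the pair $(p_t, u_t)$ satisfies the continuity equation $\partial_t p_t(z) + \nabla_z \cdot (p_t(z)\, u_t(z)) = 0$ for all $t \in (0,1)$ and $z \in \mathbb{R}^d$. -/

import Mathlib

open Real

/-- The I-CFM Gaussian conditional path `p_t = N((1-t)z₀ + t z₁, σ²I)` together
with the constant vector field `u_t(z) = z₁ - z₀` satisfies the continuity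
equation `∂ₜ p_t(z) + ∇_z · (p_t(z) u_t(z)) = 0` for all `t ∈ (0,1)` and all `z`. -/
theorem icfm_continuity_equation {d : ℕ} (σ : ℝ) (hσ : 0 < σ)
    (z₀ z₁ : EuclideanSpace ℝ (Fin d))
    (p : ℝ → EuclideanSpace ℝ (Fin d) → ℝ)
    (hp : ∀ t z, p t z =
      (Real.sqrt ((2 * π * σ ^ 2) ^ d))⁻¹ *
        Real.exp (-‖z - ((1 - t) • z₀ + t • z₁)‖ ^ 2 / (2 * σ ^ 2))) :
    ∀ t ∈ Set.Ioo (0:ℝ) 1, ∀ z : EuclideanSpace ℝ (Fin d),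
      deriv (fun s => p s z) t +
        ∑ i : Fin d,
          fderiv ℝ (fun w => p t w * (z₁ - z₀) i) z (EuclideanSpace.single i 1) = 0 := by
  intro t ht z
  simp only [hp]
  set C := (Real.sqrt ((2 * π * σ ^ 2) ^ d))⁻¹ with hC
  set μ : EuclideanSpace ℝ (Fin d) := (1 - t) • z₀ + t • z₁ with hμ
  -- time derivative
  have hmean : HasDerivAt (fun s : ℝ => z - ((1 - s) • z₀ + s • z₁)) (z₀ - z₁) t := by
    have h1 : HasDerivAt (fun s : ℝ => (1 - s) • z₀ + s • z₁)
        ((-1 : ℝ) • z₀ + (1 : ℝ) • z₁) t :=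
      (((hasDerivAt_id t).const_sub 1).smul_const z₀).add ((hasDerivAt_id t).smul_const z₁)
    have := h1.const_sub z
    refine this.congr_deriv ?_
    simp [neg_smul]
    abel
  have hnsq := hmean.norm_sq
  have hgt : HasDerivAt (fun s : ℝ => C * Real.exp (-‖z - ((1 - s) • z₀ + s • z₁)‖ ^ 2 / (2 * σ ^ 2)))
      (C * (Real.exp (-‖z - ((1 - t) • z₀ + t • z₁)‖ ^ 2 / (2 * σ ^ 2)) *
        (-(2 * inner ℝ (z - ((1 - t) • z₀ + t • z₁)) (z₀ - z₁)) / (2 * σ ^ 2)))) t :=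
    (hnsq.neg.div_const (2 * σ ^ 2)).exp.const_mul C
  rw [hgt.deriv]
  -- spatial derivative
  have hspace : ∀ i : Fin d,
      fderiv ℝ (fun w : EuclideanSpace ℝ (Fin d) => (C * Real.exp (-‖w - μ‖ ^ 2 / (2 * σ ^ 2))) * (z₁ - z₀) i) z
        (EuclideanSpace.single i 1)
      = (C * Real.exp (-‖z - μ‖ ^ 2 / (2 * σ ^ 2))) * (z₁ - z₀) i *
          (-(2 * (z - μ) i) / (2 * σ ^ 2)) := by
    intro i
    simp only [div_eq_mul_inv]
    have hsub : HasFDerivAt (fun w : EuclideanSpace ℝ (Fin d) => w - μ)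
        (ContinuousLinearMap.id ℝ _) z := (hasFDerivAt_id z).sub_const μ
    have h2 := ((((hsub.norm_sq.neg.mul_const ((2 * σ ^ 2)⁻¹)).exp.const_mul C).mul_const
      ((z₁ - z₀) i))).fderiv
    erw [h2]
    simp [ContinuousLinearMap.smul_apply, real_inner_comm,
      EuclideanSpace.inner_single_right, PiLp.sub_apply]
    ring
  simp only [hspace]
  have hinner : (inner ℝ (z - μ) (z₀ - z₁) : ℝ) = -∑ i : Fin d, (z - μ) i * (z₁ - z₀) i := by
    simp [PiLp.inner_apply, RCLike.inner_apply, PiLp.sub_apply]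
    rw [← Finset.sum_neg_distrib]
    congr 1; ext i; ring
  rw [hinner, ← hμ]
  have hsum : ∑ x : Fin d, C * Real.exp (-‖z - μ‖ ^ 2 / (2 * σ ^ 2)) * (z₁ - z₀) x *
        (-(2 * (z - μ) x) / (2 * σ ^ 2))
      = (∑ x : Fin d, (z - μ) x * (z₁ - z₀) x) *
        (-(2 * (C * Real.exp (-‖z - μ‖ ^ 2 / (2 * σ ^ 2)))) / (2 * σ ^ 2)) := by
    rw [Finset.sum_mul]
    exact Finset.sum_congr rfl fun x _ => by ring
  rw [hsum]
  ring
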